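/- Under NAG with L-smooth convex f, 0 < s ≤ 1/L and r ≥ 2, one has lim_{k→∞} k³ · min_{0 ≤ i ≤ k} ‖∇f(y_i)‖² = 0. -/

import Mathlib

open RealInnerProductSpace

section Aux

variable {d : ℕ}

local notation "H" => EuclideanSpace ℝ (Fin d)

private lemma path_hasDerivAt' (f : H → ℝ) (g : H → H)
    (hgrad : ∀ z, HasGradientAt f (g z) z) (a b : H) (t : ℝ) :
    HasDerivAt (fun t : ℝ => f (t • (b - a) + a)) ⟪g (t • (b - a) + a), b - a⟫ t := by
  have hp : HasDerivAt (fun t : ℝ => t • (b - a) + a) (b - a) t := by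
    simpa using ((hasDerivAt_id t).smul_const (b - a)).add_const a
  have := ((hgrad (t • (b - a) + a)).hasFDerivAt).comp_hasDerivAt t hp
  simpa [InnerProductSpace.toDual_apply_apply, Function.comp_def] using this

private lemma grad_ineq' (f : H → ℝ) (g : H → H) (hconv : ConvexOn ℝ Set.univ f)
    (hgrad : ∀ z, HasGradientAt f (g z) z) (a b : H) :
    f a + ⟪g a, b - a⟫ ≤ f b := by
  have hφ : ConvexOn ℝ Set.univ (fun t : ℝ => f (t • (b - a) + a)) := by
    have := hconv.comp_affineMap (AffineMap.lineMap a b : ℝ →ᵃ[ℝ] H)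
    simpa [Function.comp_def, AffineMap.lineMap_apply, Set.preimage_univ] using this
  have h01 : (0:ℝ) < 1 := one_pos
  have hd := path_hasDerivAt' f g hgrad a b 0
  have := hφ.le_slope_of_hasDerivAt (Set.mem_univ 0) (Set.mem_univ 1) h01 hd
  rw [slope_def_field] at this
  simp only [zero_smul, zero_add, one_smul, sub_add_cancel] at this
  nlinarith [this]

private lemma descent_lemma' (f : H → ℝ) (g : H → H) (L : ℝ)
    (hgrad : ∀ z, HasGradientAt f (g z) z)
    (hlip : ∀ z w, ‖g z - g w‖ ≤ L * ‖z - w‖) (a b : H) :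
    f b ≤ f a + ⟪g a, b - a⟫ + L / 2 * ‖b - a‖ ^ 2 := by
  set c : ℝ := ⟪g a, b - a⟫ with hc
  set η : ℝ → ℝ := fun t => f (t • (b - a) + a) - t * c - L / 2 * t ^ 2 * ‖b - a‖ ^ 2 with hη
  have hder : ∀ t : ℝ, HasDerivAt η
      (⟪g (t • (b - a) + a), b - a⟫ - c - L * t * ‖b - a‖ ^ 2) t := by
    intro t
    have h1 := path_hasDerivAt' f g hgrad a b t
    have h2 : HasDerivAt (fun t : ℝ => t * c) c t := by simpa using (hasDerivAt_id t).mul_const c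
    have h3 : HasDerivAt (fun t : ℝ => L / 2 * t ^ 2 * ‖b - a‖ ^ 2)
        (L * t * ‖b - a‖ ^ 2) t := by
      have : HasDerivAt (fun t : ℝ => t ^ 2) (2 * t) t := by
        simpa using hasDerivAt_pow 2 t
      have := (this.const_mul (L / 2)).mul_const (‖b - a‖ ^ 2)
      rw [show L * t * ‖b - a‖ ^ 2 = L / 2 * (2 * t) * ‖b - a‖ ^ 2 by ring]; exact this
    exact (h1.sub h2).sub h3
  have hmono : AntitoneOn η (Set.Icc (0:ℝ) 1) := by
    apply antitoneOn_of_deriv_nonpos (convex_Icc 0 1)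
    · exact fun t _ => ((hder t).differentiableAt).continuousAt.continuousWithinAt
    · exact fun t _ => ((hder t).differentiableAt).differentiableWithinAt
    · intro t ht
      rw [interior_Icc] at ht
      rw [(hder t).deriv]
      have hlt : ⟪g (t • (b - a) + a) - g a, b - a⟫ ≤ L * t * ‖b - a‖ ^ 2 := by
        calc ⟪g (t • (b - a) + a) - g a, b - a⟫ ≤ ‖g (t • (b - a) + a) - g a‖ * ‖b - a‖ :=
              real_inner_le_norm _ _
          _ ≤ (L * ‖(t • (b - a) + a) - a‖) * ‖b - a‖ := by
              apply mul_le_mul_of_nonneg_right (hlip _ _) (norm_nonneg _)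
          _ = L * t * ‖b - a‖ ^ 2 := by
              rw [add_sub_cancel_right, norm_smul]
              simp [abs_of_pos ht.1]
              ring
      have hexp : ⟪g (t • (b - a) + a) - g a, b - a⟫
          = ⟪g (t • (b - a) + a), b - a⟫ - c := by
        rw [inner_sub_left]
      linarith [hexp ▸ hlt]
  have h10 := hmono (Set.mem_Icc.2 ⟨le_refl 0, zero_le_one⟩)
      (Set.mem_Icc.2 ⟨zero_le_one, le_refl 1⟩) zero_le_one
  simp only [hη] at h10
  simp only [zero_smul, zero_add, one_smul, sub_add_cancel] at h10
  nlinarith [h10]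

private lemma convexOn_sub_inner' (f : H → ℝ) (hconv : ConvexOn ℝ Set.univ f) (c : H) :
    ConvexOn ℝ Set.univ (fun z => f z - ⟪c, z⟫) := by
  refine ⟨convex_univ, fun p _ q _ α β hα hβ hαβ => ?_⟩
  have := hconv.2 (Set.mem_univ p) (Set.mem_univ q) hα hβ hαβ
  simp only [inner_add_right, real_inner_smul_right, smul_eq_mul]
  simp only [smul_eq_mul] at this
  linarith

private lemma grad_sub_inner' (f : H → ℝ) (g : H → H)
    (hgrad : ∀ z, HasGradientAt f (g z) z) (c : H) :
    ∀ z, HasGradientAt (fun z => f z - ⟪c, z⟫) (g z - c) z := by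
  intro z
  rw [hasGradientAt_iff_hasFDerivAt]
  have h1 : HasFDerivAt f (InnerProductSpace.toDual ℝ H (g z)) z := (hgrad z).hasFDerivAt
  have h2 : HasFDerivAt (fun z : H => ⟪c, z⟫) (InnerProductSpace.toDual ℝ H c) z := by
    have : HasFDerivAt (fun z : H => (InnerProductSpace.toDual ℝ H c) z)
        (InnerProductSpace.toDual ℝ H c) z := (InnerProductSpace.toDual ℝ H c).hasFDerivAt
    simpa [InnerProductSpace.toDual_apply_apply] using this
  have := h1.sub h2
  rw [map_sub]; exact this

/-- strengthened convexity inequality for `L`-smooth convex `f` -/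
private lemma coco' (f : H → ℝ) (g : H → H) (L : ℝ) (hL : 0 < L)
    (hconv : ConvexOn ℝ Set.univ f)
    (hgrad : ∀ z, HasGradientAt f (g z) z)
    (hlip : ∀ z w, ‖g z - g w‖ ≤ L * ‖z - w‖) (a b : H) :
    f a + ⟪g a, b - a⟫ + 1 / (2 * L) * ‖g b - g a‖ ^ 2 ≤ f b := by
  set h : H → ℝ := fun z => f z - ⟪g a, z⟫ with hh
  set gh : H → H := fun z => g z - g a with hgh
  have hconvh := convexOn_sub_inner' f hconv (g a)
  have hgradh := grad_sub_inner' f g hgrad (g a)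
  have hliph : ∀ z w, ‖gh z - gh w‖ ≤ L * ‖z - w‖ := by
    intro z w; simpa [hgh, sub_sub_sub_cancel_right] using hlip z w
  have hmin : ∀ z, h a ≤ h z := by
    intro z
    have := grad_ineq' h gh hconvh hgradh a z
    simpa [hgh, inner_zero_left] using this
  set b' : H := b - (1 / L) • (gh b) with hb'
  have hd := descent_lemma' h gh L hgradh hliph b b'
  have hb'b : b' - b = -((1 / L) • gh b) := by rw [hb']; abel
  have hinner : ⟪gh b, b' - b⟫ = -(1 / L) * ‖gh b‖ ^ 2 := by
    rw [hb'b, inner_neg_right, real_inner_smul_right, real_inner_self_eq_norm_sq]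
    ring
  have hnorm : ‖b' - b‖ ^ 2 = (1 / L) ^ 2 * ‖gh b‖ ^ 2 := by
    rw [hb'b, norm_neg, norm_smul]
    rw [Real.norm_eq_abs, abs_of_pos (by positivity : (0:ℝ) < 1 / L)]
    ring
  have key : h a ≤ h b - 1 / (2 * L) * ‖gh b‖ ^ 2 := by
    have := hmin b'
    rw [hinner, hnorm] at hd
    calc h a ≤ h b' := this
      _ ≤ h b + (-(1 / L) * ‖gh b‖ ^ 2) + L / 2 * ((1 / L) ^ 2 * ‖gh b‖ ^ 2) := hd
      _ = h b - 1 / (2 * L) * ‖gh b‖ ^ 2 := by field_simp; ring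
  simp only [hh, hgh] at key
  have hib : ⟪g a, b⟫ - ⟪g a, a⟫ = ⟪g a, b - a⟫ := by rw [inner_sub_right]
  linarith [key, hib]

end Aux

set_option maxHeartbeats 1600000 in
theorem stmt_9 {d : ℕ} (f : EuclideanSpace ℝ (Fin d) → ℝ)
    (g : EuclideanSpace ℝ (Fin d) → EuclideanSpace ℝ (Fin d)) (L : ℝ) (hL : 0 < L)
    (hconv : ConvexOn ℝ Set.univ f)
    (hgrad : ∀ z, HasGradientAt f (g z) z)
    (hlip : ∀ z w, ‖g z - g w‖ ≤ L * ‖z - w‖)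
    (xs : EuclideanSpace ℝ (Fin d)) (hmin : ∀ z, f xs ≤ f z)
    (s r : ℝ) (hs : 0 < s) (hsL : s ≤ 1 / L) (hr : 2 ≤ r)
    (x y : ℕ → EuclideanSpace ℝ (Fin d))
    (hx0 : x 0 = y 0)
    (hx : ∀ k : ℕ, x (k + 1) = y k - s • g (y k))
    (hy : ∀ k : ℕ, y (k + 1) = x (k + 1) + (((k : ℝ)) / ((k : ℝ) + r + 1)) • (x (k + 1) - x k)) :
    Filter.Tendsto
      (fun k : ℕ => (k : ℝ) ^ 3 *
        (Finset.range (k + 1)).inf' Finset.nonempty_range_add_one (fun i => ‖g (y i)‖ ^ 2))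
      Filter.atTop (nhds 0) := by
  have hr0 : (0:ℝ) < r := by linarith
  have hrne : (r:ℝ) ≠ 0 := ne_of_gt hr0
  -- weakened cocoercivity inequality with step size s
  have hT : ∀ a b, f a + ⟪g a, b - a⟫ + s / 2 * ‖g b - g a‖ ^ 2 ≤ f b := by
    intro a b
    have h1 := coco' f g L hL hconv hgrad hlip a b
    have hsL' : s * L ≤ 1 := by
      rw [le_div_iff₀ hL] at hsL; exact hsL
    have h2 : s / 2 * ‖g b - g a‖ ^ 2 ≤ 1 / (2 * L) * ‖g b - g a‖ ^ 2 := by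
      apply mul_le_mul_of_nonneg_right _ (sq_nonneg _)
      rw [div_le_div_iff₀ (by norm_num) (by positivity)]
      nlinarith [hsL', hL]
    linarith
  -- gradient vanishes at the minimizer
  have hgxs : g xs = 0 := by
    have hloc : IsLocalMin f xs := Filter.Eventually.of_forall hmin
    have := hloc.hasFDerivAt_eq_zero (hgrad xs).hasFDerivAt
    have h0 : (InnerProductSpace.toDual ℝ (EuclideanSpace ℝ (Fin d))) (g xs)
        = (InnerProductSpace.toDual ℝ (EuclideanSpace ℝ (Fin d))) 0 := by
      simpa using this
    exact (InnerProductSpace.toDual ℝ (EuclideanSpace ℝ (Fin d))).injective h0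
  -- (★) : key descent-type inequality
  have hstar : ∀ j : ℕ, f (x (j+1)) + s/2 * ‖g (y j)‖^2 + s/2 * ‖g (x (j+1))‖^2 ≤ f (y j) := by
    intro j
    have h1 := hT (x (j+1)) (y j)
    have hyx : y j - x (j+1) = s • g (y j) := by rw [hx j]; abel
    rw [hyx, real_inner_smul_right] at h1
    have hns : ‖g (y j) - g (x (j+1))‖^2
        = ‖g (y j)‖^2 - 2 * ⟪g (x (j+1)), g (y j)⟫ + ‖g (x (j+1))‖^2 := by
      rw [norm_sub_sq_real, real_inner_comm]
    rw [hns] at h1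
    linarith
  have hpsi : ∀ j : ℕ, s/2 * ‖g (y j)‖^2 + s/2 * ‖g (x (j+1))‖^2 ≤ f (y j) - f xs := by
    intro j
    have := hstar j
    have := hmin (x (j+1))
    linarith
  -- the auxiliary sequence z
  set z : ℕ → EuclideanSpace ℝ (Fin d) :=
    fun k => (((k:ℝ)+r)/r) • y k - ((k:ℝ)/r) • x k with hz
  have zstep : ∀ k : ℕ, z (k+1) = z k - (s*((k:ℝ)+r)/r) • g (y k) := by
    intro k
    have hk1 : ((k:ℝ) + r + 1) ≠ 0 := by positivity
    simp only [hz]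
    rw [hy k, hx k]
    push_cast
    match_scalars <;> (field_simp; ring)
  have zdec : ∀ k : ℕ, z k - xs = (y k - xs) + ((k:ℝ)/r) • (y k - x k) := by
    intro k
    simp only [hz]
    match_scalars <;> (field_simp; try ring)
  -- basic inner product lower bounds
  have hI1 : ∀ k : ℕ, (f (y k) - f xs) + s/2 * ‖g (y k)‖^2 ≤ ⟪g (y k), y k - xs⟫ := by
    intro k
    have h1 := hT (y k) xs
    have hne : xs - y k = -(y k - xs) := by abel
    rw [hne, inner_neg_right, hgxs] at h1
    have h2 : ‖(0:EuclideanSpace ℝ (Fin d)) - g (y k)‖^2 = ‖g (y k)‖^2 := by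
      rw [zero_sub, norm_neg]
    rw [h2] at h1
    linarith
  have hI2 : ∀ j : ℕ, (f (y (j+1)) - f xs) - (f (y j) - f xs)
      + s/2 * (‖g (y j)‖^2 + ‖g (x (j+1))‖^2 + ‖g (x (j+1)) - g (y (j+1))‖^2)
      ≤ ⟪g (y (j+1)), y (j+1) - x (j+1)⟫ := by
    intro j
    have h1 := hT (y (j+1)) (x (j+1))
    have hne : x (j+1) - y (j+1) = -(y (j+1) - x (j+1)) := by abel
    rw [hne, inner_neg_right] at h1
    have h3 := hstar j
    linarith
  -- the Lyapunov function
  set B : ℕ → ℝ := fun k => r^2 * ‖z k - xs‖^2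
      + 2*s*(k:ℝ)*((k:ℝ)+r)*(f (y (k-1)) - f xs)
      - s^2*(k:ℝ)*((k:ℝ)+r)*‖g (y (k-1))‖^2 with hB
  have key2 : ∀ j : ℕ, 0 ≤ B (j+1) := by
    intro j
    have hj0 : (0:ℝ) ≤ (j:ℝ) := Nat.cast_nonneg j
    have hψ : s/2*‖g (y j)‖^2 ≤ f (y j) - f xs := by
      have := mul_nonneg hs.le (sq_nonneg ‖g (x (j+1))‖)
      linarith [hpsi j]
    have hc : (0:ℝ) ≤ s*((j:ℝ)+1)*(((j:ℝ)+1)+r) := by positivity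
    simp only [hB, show (j+1)-1 = j from rfl]
    push_cast
    nlinarith [mul_le_mul_of_nonneg_left hψ hc, sq_nonneg ‖z (j+1) - xs‖,
      sq_nonneg r, mul_nonneg (mul_nonneg (sq_nonneg r) (sq_nonneg ‖z (j+1) - xs‖)) hj0]
  have key1 : ∀ j : ℕ,
      B (j+2) + s^2*((j:ℝ)+1)*(((j:ℝ)+1)+r)/2 * ‖g (y (j+1))‖^2 ≤ B (j+1) := by
    intro j
    have hj0 : (0:ℝ) ≤ (j:ℝ) := Nat.cast_nonneg j
    have hzs := zstep (j+1)
    simp only [show (j:ℕ)+1+1 = j+2 from rfl] at hzs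
    push_cast at hzs
    have hz1 : z (j+2) - xs = (z (j+1) - xs) - (s*(((j:ℝ)+1)+r)/r) • g (y (j+1)) := by
      rw [hzs, sub_right_comm]
    have hP : ‖z (j+2) - xs‖^2 = ‖z (j+1) - xs‖^2
        - 2*((s*(((j:ℝ)+1)+r)/r) * ⟪g (y (j+1)), z (j+1) - xs⟫)
        + (s*(((j:ℝ)+1)+r)/r)^2 * ‖g (y (j+1))‖^2 := by
      rw [hz1, norm_sub_sq_real, real_inner_smul_right, norm_smul, Real.norm_eq_abs,
        mul_pow, sq_abs, real_inner_comm]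
      try ring
    have hPr : r^2 * ‖z (j+2) - xs‖^2 = r^2*‖z (j+1) - xs‖^2
        - 2*s*r*(((j:ℝ)+1)+r)*⟪g (y (j+1)), z (j+1) - xs⟫
        + s^2*(((j:ℝ)+1)+r)^2*‖g (y (j+1))‖^2 := by
      rw [hP]; field_simp
    have hdecr : r * ⟪g (y (j+1)), z (j+1) - xs⟫
        = r*⟪g (y (j+1)), y (j+1) - xs⟫
          + ((j:ℝ)+1)*⟪g (y (j+1)), y (j+1) - x (j+1)⟫ := by
      rw [zdec (j+1), inner_add_right, real_inner_smul_right]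
      push_cast
      field_simp
      try ring
    have hlow : r*((f (y (j+1)) - f xs) + s/2*‖g (y (j+1))‖^2)
        + ((j:ℝ)+1)*((f (y (j+1)) - f xs) - (f (y j) - f xs)
            + s/2*(‖g (y j)‖^2 + ‖g (x (j+1))‖^2 + ‖g (x (j+1)) - g (y (j+1))‖^2))
        ≤ r * ⟪g (y (j+1)), z (j+1) - xs⟫ := by
      rw [hdecr]
      have e1 := mul_le_mul_of_nonneg_left (hI1 (j+1)) hr0.le
      have e2 := mul_le_mul_of_nonneg_left (hI2 j) (by linarith : (0:ℝ) ≤ (j:ℝ)+1)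
      linarith
    have hmulc : (0:ℝ) ≤ 2*s*(((j:ℝ)+1)+r) := by positivity
    have hmul := mul_le_mul_of_nonneg_left hlow hmulc
    have hψ : s/2*‖g (y (j+1))‖^2 ≤ f (y (j+1)) - f xs := by
      have := mul_nonneg hs.le (sq_nonneg ‖g (x (j+1+1))‖)
      linarith [hpsi (j+1)]
    have hcψ : 2*s*((j:ℝ)+2)*(((j:ℝ)+2)+r) - 2*s*((((j:ℝ)+1)+r))^2 ≤ 0 := by
      have hA : (0:ℝ) ≤ s*((r-2)*((j:ℝ)+1)) :=
        mul_nonneg hs.le (mul_nonneg (by linarith) (by linarith))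
      have hBB : (0:ℝ) ≤ s*(r^2-r-1) := mul_nonneg hs.le (by nlinarith)
      nlinarith [hA, hBB]
    have t1 := mul_le_mul_of_nonpos_left hψ hcψ
    have hV2 : (0:ℝ) ≤ 2*‖g (x (j+1))‖^2 + 2*‖g (x (j+1)) - g (y (j+1))‖^2
        - ‖g (y (j+1))‖^2 := by
      have hvd : g (y (j+1)) = g (x (j+1)) - (g (x (j+1)) - g (y (j+1))) := by abel
      have hn : ‖g (y (j+1))‖ ≤ ‖g (x (j+1))‖ + ‖g (x (j+1)) - g (y (j+1))‖ := by
        calc ‖g (y (j+1))‖ = ‖g (x (j+1)) - (g (x (j+1)) - g (y (j+1)))‖ := by rw [← hvd]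
          _ ≤ ‖g (x (j+1))‖ + ‖g (x (j+1)) - g (y (j+1))‖ := norm_sub_le _ _
      nlinarith [hn, norm_nonneg (g (y (j+1))), norm_nonneg (g (x (j+1))),
        norm_nonneg (g (x (j+1)) - g (y (j+1))), sq_nonneg (‖g (x (j+1))‖ - ‖g (x (j+1)) - g (y (j+1))‖)]
    have t2 : (0:ℝ) ≤ (s^2*(((j:ℝ)+1)+r)*((j:ℝ)+1))
        * (2*‖g (x (j+1))‖^2 + 2*‖g (x (j+1)) - g (y (j+1))‖^2 - ‖g (y (j+1))‖^2) := by
      apply mul_nonneg _ hV2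
      positivity
    have t3 : (0:ℝ) ≤ s^2*r*(((j:ℝ)+1)+r)*‖g (y (j+1))‖^2 := by positivity
    simp only [hB, show (j+2)-1 = j+1 from rfl, show (j+1)-1 = j from rfl]
    push_cast
    linarith [hPr, hmul, t1, t2, t3]
  -- summability of k² ‖g (y k)‖²
  set a : ℕ → ℝ := fun n => (n:ℝ)^2 * ‖g (y n)‖^2 with ha
  have ha0 : ∀ n, 0 ≤ a n := fun n => mul_nonneg (sq_nonneg _) (sq_nonneg _)
  have htel : ∀ n : ℕ, ∑ j ∈ Finset.range n,
      (s^2*((j:ℝ)+1)*(((j:ℝ)+1)+r)/2 * ‖g (y (j+1))‖^2) ≤ B 1 := by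
    intro n
    have h1 : ∀ j ∈ Finset.range n, (s^2*((j:ℝ)+1)*(((j:ℝ)+1)+r)/2 * ‖g (y (j+1))‖^2)
        ≤ B (j+1) - B (j+2) := fun j _ => by linarith [key1 j]
    calc ∑ j ∈ Finset.range n, (s^2*((j:ℝ)+1)*(((j:ℝ)+1)+r)/2 * ‖g (y (j+1))‖^2)
        ≤ ∑ j ∈ Finset.range n, (B (j+1) - B (j+2)) := Finset.sum_le_sum h1
      _ = B 1 - B (n+1) := by
          have h2 := Finset.sum_range_sub' (fun i => B (i+1)) n
          exact h2
      _ ≤ B 1 := by linarith [key2 n]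
  have hsum_bound : ∀ n : ℕ, ∑ i ∈ Finset.range n, a i ≤ 2/s^2 * B 1 := by
    intro n
    have hB1 : 0 ≤ B 1 := key2 0
    cases n with
    | zero => simp; positivity
    | succ m =>
      rw [Finset.sum_range_succ']
      have ha0' : a 0 = 0 := by simp [ha]
      rw [ha0', add_zero]
      have hterm : ∀ j : ℕ,
          a (j+1) ≤ 2/s^2 * (s^2*((j:ℝ)+1)*(((j:ℝ)+1)+r)/2 * ‖g (y (j+1))‖^2) := by
        intro j
        have he : 2/s^2 * (s^2*((j:ℝ)+1)*(((j:ℝ)+1)+r)/2 * ‖g (y (j+1))‖^2)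
            = (((j:ℝ)+1)*(((j:ℝ)+1)+r)) * ‖g (y (j+1))‖^2 := by
          field_simp
        rw [he, ha]
        push_cast
        have h2 : ((j:ℝ)+1)^2 ≤ ((j:ℝ)+1)*(((j:ℝ)+1)+r) := by
          nlinarith [Nat.cast_nonneg (α := ℝ) j]
        exact mul_le_mul_of_nonneg_right h2 (sq_nonneg _)
      calc ∑ j ∈ Finset.range m, a (j+1)
          ≤ ∑ j ∈ Finset.range m,
              2/s^2 * (s^2*((j:ℝ)+1)*(((j:ℝ)+1)+r)/2 * ‖g (y (j+1))‖^2) :=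
            Finset.sum_le_sum (fun j _ => hterm j)
        _ = 2/s^2 * ∑ j ∈ Finset.range m,
              (s^2*((j:ℝ)+1)*(((j:ℝ)+1)+r)/2 * ‖g (y (j+1))‖^2) := by
            rw [Finset.mul_sum]
        _ ≤ 2/s^2 * B 1 := by
            apply mul_le_mul_of_nonneg_left (htel m) (by positivity)
  have hsummable : Summable a := summable_of_sum_range_le ha0 hsum_bound
  -- pass to the limit
  set Pn : ℕ → ℝ := fun n => ∑ i ∈ Finset.range n, a i with hPn
  obtain ⟨Sa, hSa⟩ := hsummable
  have htendP : Filter.Tendsto Pn Filter.atTop (nhds Sa) := hSa.tendsto_sum_nat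
  set m : ℕ → ℝ := fun k => (Finset.range (k+1)).inf' Finset.nonempty_range_add_one
      (fun i => ‖g (y i)‖^2) with hm
  have hm0 : ∀ k, 0 ≤ m k := fun k => Finset.le_inf' _ _ (fun i _ => sq_nonneg _)
  have hkey : ∀ k : ℕ, (k:ℝ)^3 * m k ≤ 8 * (Pn (k+1) - Pn (k/2+1)) := by
    intro k
    have hw : Pn (k+1) - Pn (k/2+1) = ∑ i ∈ Finset.Ico (k/2+1) (k+1), a i := by
      rw [hPn]; exact (Finset.sum_Ico_eq_sub a (by omega)).symm
    have hlow : ∀ i ∈ Finset.Ico (k/2+1) (k+1), (k:ℝ)^2/4 * m k ≤ a i := by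
      intro i hi
      rw [Finset.mem_Ico] at hi
      have h2i : (k:ℝ) ≤ 2*(i:ℝ) := by exact_mod_cast (by omega : k ≤ 2*i)
      have hik : (k:ℝ)^2/4 ≤ (i:ℝ)^2 := by nlinarith [Nat.cast_nonneg (α := ℝ) k]
      have hmi : m k ≤ ‖g (y i)‖^2 :=
        Finset.inf'_le _ (Finset.mem_range.2 (by omega))
      exact mul_le_mul hik hmi (hm0 k) (sq_nonneg _)
    have hsum := Finset.card_nsmul_le_sum (Finset.Ico (k/2+1) (k+1)) a
      ((k:ℝ)^2/4 * m k) hlow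
    rw [nsmul_eq_mul, Nat.card_Ico] at hsum
    have hcd : ((k + 1 - (k/2+1) : ℕ) : ℝ) = ((k - k/2 : ℕ) : ℝ) := by
      congr 1
      omega
    rw [hcd] at hsum
    have hhalf : (k:ℝ)/2 ≤ ((k - k/2 : ℕ) : ℝ) := by
      have h3 : k ≤ 2*(k - k/2) := by omega
      have h4 := (Nat.cast_le (α := ℝ)).2 h3
      push_cast at h4
      linarith
    have hcm : 0 ≤ (k:ℝ)^2 * m k := mul_nonneg (sq_nonneg _) (hm0 k)
    rw [hw]
    nlinarith [hsum, mul_le_mul_of_nonneg_right hhalf hcm]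
  have hdiv : Filter.Tendsto (fun k : ℕ => k/2+1) Filter.atTop Filter.atTop := by
    apply Filter.tendsto_atTop_atTop.2
    intro b
    exact ⟨2*b, fun c hc => by omega⟩
  have h1 : Filter.Tendsto (fun k : ℕ => Pn (k+1)) Filter.atTop (nhds Sa) := by
    have := htendP.comp (Filter.tendsto_add_atTop_nat 1)
    exact this
  have h2 : Filter.Tendsto (fun k : ℕ => Pn (k/2+1)) Filter.atTop (nhds Sa) := by
    have := htendP.comp hdiv
    exact this
  have h3 : Filter.Tendsto (fun k : ℕ => 8 * (Pn (k+1) - Pn (k/2+1)))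
      Filter.atTop (nhds 0) := by
    have := (h1.sub h2).const_mul (8:ℝ)
    simpa using this
  exact squeeze_zero (fun k => mul_nonneg (by positivity) (hm0 k)) hkey h3
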